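/- Let X, Y ∈ Σⁿ where X consists of n pairwise distinct characters, and Y is obtained by moving the last s characters of X to the front, with s ≤ n/2. Then ED(X,Y) = 2s, and for any substring pair X[i..j), Y[i..j) with j − i ≥ 2s, the edit distance ED(X[i..j), Y[i..j)) = 2s as well. -/

import Mathlib

set_option linter.unusedSectionVars false

/-- Costs for the Levenshtein distance (formerly in Mathlib, `Mathlib.Data.List.EditDistance.Defs`). -/
structure Levenshtein.Cost (α β δ : Type*) where
  delete : α → δ
  insert : β → δ
  substitute : α → β → δ

/-- The default unit costs (formerly in Mathlib). -/
def Levenshtein.defaultCost {α : Type*} [DecidableEq α] : Levenshtein.Cost α α ℕ where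
  delete _ := 1
  insert _ := 1
  substitute a b := if a = b then 0 else 1

/-- Inner step of `suffixLevenshtein` (formerly in Mathlib). -/
def Levenshtein.impl {α β δ : Type*} [AddZeroClass δ] [Min δ] (C : Levenshtein.Cost α β δ)
    (xs : List α) (y : β) (d : {r : List δ // 0 < r.length}) : {r : List δ // 0 < r.length} :=
  let ⟨ds, w⟩ := d
  xs.zip (ds.zip ds.tail) |>.foldr
    (init := ⟨[ds.getLast (List.length_pos_iff.mp w) + C.insert y], by simp⟩)
    (fun ⟨x, d₀, d₁⟩ ⟨r, w⟩ =>
      ⟨min (C.delete x + r[0]) (min (C.insert y + d₀) (C.substitute x y + d₁)) :: r, by simp⟩)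

/-- Levenshtein distances of all suffixes of `xs` to `ys` (formerly in Mathlib). -/
def suffixLevenshtein {α β δ : Type*} [AddZeroClass δ] [Min δ] (C : Levenshtein.Cost α β δ)
    (xs : List α) (ys : List β) : {r : List δ // 0 < r.length} :=
  ys.foldr
    (Levenshtein.impl C xs)
    (xs.foldr (init := ⟨[0], by simp⟩) (fun a ⟨r, w⟩ => ⟨(C.delete a + r[0]) :: r, by simp⟩))

/-- The Levenshtein distance (formerly in Mathlib). -/
def levenshtein {α β δ : Type*} [AddZeroClass δ] [Min δ] (C : Levenshtein.Cost α β δ)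
    (xs : List α) (ys : List β) : δ :=
  let ⟨r, w⟩ := suffixLevenshtein C xs ys
  r[0]

/-- The edit distance between two lists (Levenshtein distance with unit costs). -/
def ED {α : Type*} [DecidableEq α] (X Y : List α) : ℕ :=
  levenshtein Levenshtein.defaultCost X Y

/-- The substring X[i..j) of a list. -/
def sub {α : Type*} (X : List α) (i j : ℕ) : List α := (X.drop i).take (j - i)

namespace LevPort
variable {α β δ : Type*} [AddZeroClass δ] [Min δ] (C : Levenshtein.Cost α β δ)

lemma lev_eq (xs : List α) (ys : List β) : levenshtein C xs ys =
    (suffixLevenshtein C xs ys).1[0]'(suffixLevenshtein C xs ys).2 := rfl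

lemma impl_cons (x : α) (xs : List α) (y : β) (d d₂ : {r : List δ // 0 < r.length}) (d0 : δ)
    (h : d.1 = d0 :: d₂.1) :
    (Levenshtein.impl C (x :: xs) y d).1 =
      min (C.delete x + (Levenshtein.impl C xs y d₂).1[0]'(Levenshtein.impl C xs y d₂).2)
        (min (C.insert y + d0) (C.substitute x y + d₂.1[0]'d₂.2)) ::
        (Levenshtein.impl C xs y d₂).1 := by
  obtain ⟨ds, w⟩ := d
  obtain ⟨ds₂, w₂⟩ := d₂
  simp only at h
  subst h
  cases ds₂ with
  | nil => simp at w₂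
  | cons d1 ds₂ => rfl

lemma suff_tail (x : α) (xs : List α) (ys : List β) :
    (suffixLevenshtein C (x :: xs) ys).1.tail = (suffixLevenshtein C xs ys).1 := by
  induction ys with
  | nil => rfl
  | cons y ys ih =>
    show (Levenshtein.impl C (x :: xs) y (suffixLevenshtein C (x :: xs) ys)).1.tail =
      (Levenshtein.impl C xs y (suffixLevenshtein C xs ys)).1
    have h : (suffixLevenshtein C (x :: xs) ys).1 =
        (suffixLevenshtein C (x :: xs) ys).1.head
          (List.ne_nil_of_length_pos (suffixLevenshtein C (x :: xs) ys).2) ::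
          (suffixLevenshtein C xs ys).1 := by
      rw [← ih, List.cons_head_tail]
    rw [impl_cons C x xs y _ _ _ h]
    rfl

lemma suff_nil (ys : List β) : (suffixLevenshtein C [] ys).1 = [levenshtein C [] ys] := by
  induction ys with
  | nil => rfl
  | cons y ys ih => rfl

@[simp] lemma lev_nil_nil : levenshtein C ([] : List α) ([] : List β) = 0 := rfl

@[simp] lemma lev_cons_nil (x : α) (xs : List α) :
    levenshtein C (x :: xs) ([] : List β) = C.delete x + levenshtein C xs [] := rfl

@[simp] lemma lev_nil_cons (y : β) (ys : List β) :
    levenshtein C ([] : List α) (y :: ys) = levenshtein C [] ys + C.insert y := by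
  show (suffixLevenshtein C [] ys).1.getLast
    (List.ne_nil_of_length_pos (suffixLevenshtein C [] ys).2) + C.insert y = _
  simp only [suff_nil, List.getLast_singleton]

@[simp] lemma lev_cons_cons (x : α) (xs : List α) (y : β) (ys : List β) :
    levenshtein C (x :: xs) (y :: ys) =
      min (C.delete x + levenshtein C xs (y :: ys))
        (min (C.insert y + levenshtein C (x :: xs) ys)
          (C.substitute x y + levenshtein C xs ys)) := by
  have h : (suffixLevenshtein C (x :: xs) ys).1 =
      levenshtein C (x :: xs) ys :: (suffixLevenshtein C xs ys).1 := by
    rw [lev_eq, List.getElem_zero, ← suff_tail C x xs ys, List.cons_head_tail]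
  show (Levenshtein.impl C (x :: xs) y (suffixLevenshtein C (x :: xs) ys)).1[0]'
    (Levenshtein.impl C (x :: xs) y (suffixLevenshtein C (x :: xs) ys)).2 = _
  simp only [impl_cons C x xs y _ _ _ h, List.getElem_cons_zero]
  rfl

@[simp] lemma defaultCost_delete {α : Type*} [DecidableEq α] (a : α) :
    (Levenshtein.defaultCost (α := α)).delete a = 1 := rfl

@[simp] lemma defaultCost_insert {α : Type*} [DecidableEq α] (a : α) :
    (Levenshtein.defaultCost (α := α)).insert a = 1 := rfl

end LevPort

open LevPort

namespace EDAux
open List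
variable {α : Type*} [DecidableEq α]

lemma ED_nil_left (V : List α) : ED [] V = V.length := by
  induction V with
  | nil => simp [ED]
  | cons y V ih => simp [ED] at ih ⊢; omega

lemma ED_nil_right (U : List α) : ED U [] = U.length := by
  induction U with
  | nil => simp [ED]
  | cons x U ih => simp [ED] at ih ⊢; omega

lemma ED_cons_cons (x y : α) (U V : List α) :
    ED (x :: U) (y :: V) =
      min (1 + ED U (y :: V)) (min (1 + ED (x :: U) V) ((if x = y then 0 else 1) + ED U V)) := by
  simp [ED, Levenshtein.defaultCost]

lemma ED_self (U : List α) : ED U U = 0 := by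
  induction U with
  | nil => simp [ED]
  | cons x U ih => rw [ED_cons_cons]; simp [ih]

lemma ED_le_cons_right (U : List α) (y : α) (V : List α) : ED U (y :: V) ≤ 1 + ED U V := by
  cases U with
  | nil => simp [ED_nil_left, ED_nil_right]
  | cons x U => rw [ED_cons_cons]; exact le_trans (min_le_right _ _) (min_le_left _ _)

lemma ED_append_right_le (U D : List α) : ED (U ++ D) U ≤ D.length := by
  induction U with
  | nil => simp [ED_nil_right]
  | cons x U ih =>
    rw [List.cons_append, ED_cons_cons]
    refine le_trans (le_trans (min_le_right _ _) (min_le_right _ _)) ?_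
    simp [ih]

lemma ED_rotate_le (U A B : List α) : ED (U ++ B) (A ++ U) ≤ A.length + B.length := by
  induction A with
  | nil => simpa using ED_append_right_le U B
  | cons a A ih =>
    calc ED (U ++ B) (a :: (A ++ U)) ≤ 1 + ED (U ++ B) (A ++ U) := ED_le_cons_right _ _ _
    _ ≤ 1 + (A.length + B.length) := by omega
    _ = (a :: A).length + B.length := by simp; omega

/-- An alignment between two lists: `P` records the pairs of elements matched
(or substituted) against each other, in order. -/
inductive Al : List α → List α → List (α × α) → Prop
  | nil : Al [] [] []
  | del (x) {U V P} : Al U V P → Al (x :: U) V P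
  | ins (y) {U V P} : Al U V P → Al U (y :: V) P
  | pair (x y) {U V P} : Al U V P → Al (x :: U) (y :: V) ((x, y) :: P)

lemma Al.nil_left : ∀ V : List α, Al [] V [] := by
  intro V; induction V with
  | nil => exact Al.nil
  | cons y V ih => exact Al.ins y ih

lemma Al.nil_right : ∀ U : List α, Al U [] [] := by
  intro U; induction U with
  | nil => exact Al.nil
  | cons x U ih => exact Al.del x ih

lemma Al.fst_sublist {U V : List α} {P} (h : Al U V P) : P.map Prod.fst <+ U := by
  induction h with
  | nil => simp
  | del x _ ih => exact ih.trans (List.sublist_cons_self _ _)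
  | ins y _ ih => exact ih
  | pair x y _ ih => simpa using ih.cons₂ x

lemma Al.snd_sublist {U V : List α} {P} (h : Al U V P) : P.map Prod.snd <+ V := by
  induction h with
  | nil => simp
  | del x _ ih => exact ih
  | ins y _ ih => exact ih.trans (List.sublist_cons_self _ _)
  | pair x y _ ih => simpa using ih.cons₂ y

lemma Al.split {U V : List α} {P : List (α × α)} (h : Al U V P) :
    ∀ P₁ p P₂, P = P₁ ++ p :: P₂ →
      ∃ U₁ U₂ V₁ V₂, U = U₁ ++ p.1 :: U₂ ∧ V = V₁ ++ p.2 :: V₂ ∧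
        P₁.length ≤ U₁.length ∧ P₁.length ≤ V₁.length ∧
        P₂.length ≤ U₂.length ∧ P₂.length ≤ V₂.length := by
  induction h with
  | nil => intro P₁ p P₂ h; exact absurd h (by simp)
  | del x h ih =>
    intro P₁ p P₂ hP
    obtain ⟨U₁, U₂, V₁, V₂, hU, hV, h1, h2, h3, h4⟩ := ih P₁ p P₂ hP
    exact ⟨x :: U₁, U₂, V₁, V₂, by simp [hU], hV, by simp; omega, h2, h3, h4⟩
  | ins y h ih =>
    intro P₁ p P₂ hP
    obtain ⟨U₁, U₂, V₁, V₂, hU, hV, h1, h2, h3, h4⟩ := ih P₁ p P₂ hP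
    exact ⟨U₁, U₂, y :: V₁, V₂, hU, by simp [hV], h1, by simp; omega, h3, h4⟩
  | @pair x y U V P h ih =>
    intro P₁ p P₂ hP
    cases P₁ with
    | nil =>
      simp at hP
      obtain ⟨hp, rfl⟩ := hP
      refine ⟨[], U, [], V, by simp [← hp], by simp [← hp], by simp, by simp, ?_, ?_⟩
      · simpa using h.fst_sublist.length_le
      · simpa using h.snd_sublist.length_le
    | cons q P₁ =>
      simp at hP
      obtain ⟨rfl, hP⟩ := hP
      obtain ⟨U₁, U₂, V₁, V₂, hU, hV, h1, h2, h3, h4⟩ := ih P₁ p P₂ hP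
      exact ⟨x :: U₁, U₂, y :: V₁, V₂, by simp [hU], by simp [hV], by simp; omega,
        by simp; omega, h3, h4⟩

/-- From the Levenshtein recursion, extract an alignment witnessing the lower bound. -/
lemma exists_al (U V : List α) :
    ∃ P, Al U V P ∧
      U.length + V.length ≤ ED U V + P.length + P.countP (fun p => p.1 = p.2) := by
  induction U generalizing V with
  | nil =>
    exact ⟨[], Al.nil_left V, by simp [ED_nil_left]⟩
  | cons x U ih =>
    induction V with
    | nil =>
      exact ⟨[], Al.nil_right _, by simp [ED_nil_right]⟩
    | cons y V ihV =>
      rw [ED_cons_cons]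
      rcases min_cases (1 + ED U (y :: V))
        (min (1 + ED (x :: U) V) ((if x = y then 0 else 1) + ED U V)) with
        ⟨he, -⟩ | ⟨he, -⟩
      · obtain ⟨P, hAl, hle⟩ := ih (y :: V)
        exact ⟨P, hAl.del x, by rw [he]; simp at hle ⊢; omega⟩
      · rcases min_cases (1 + ED (x :: U) V) ((if x = y then 0 else 1) + ED U V) with
          ⟨he2, -⟩ | ⟨he2, -⟩
        · obtain ⟨P, hAl, hle⟩ := ihV
          exact ⟨P, hAl.ins y, by rw [he, he2]; simp at hle ⊢; omega⟩
        · obtain ⟨P, hAl, hle⟩ := ih V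
          refine ⟨(x, y) :: P, hAl.pair x y, ?_⟩
          rw [he, he2]
          by_cases hxy : x = y <;> simp [hxy, List.countP_cons] at hle ⊢ <;> omega

/-- In a nodup list, the decomposition around a given element is unique (in length). -/
lemma nodup_split_length {A B C D : List α} {z : α} (h : (A ++ z :: B).Nodup)
    (e : A ++ z :: B = C ++ z :: D) : A.length = C.length := by
  induction A generalizing C with
  | nil =>
    cases C with
    | nil => rfl
    | cons c C =>
      rw [List.nil_append, List.cons_append] at e
      injection e with e1 e2
      subst e1
      rw [List.nil_append, e2] at h
      exact absurd (by simp : z ∈ C ++ z :: D) (List.nodup_cons.mp h).1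
  | cons a A ih =>
    cases C with
    | nil =>
      rw [List.cons_append, List.nil_append] at e
      injection e with e1 e2
      subst e1
      rw [List.cons_append] at h
      exact absurd (by rw [← e2]; simp : a ∈ D) (e2 ▸ (List.nodup_cons.mp h).1)
    | cons c C =>
      rw [List.cons_append, List.cons_append] at e
      injection e with e1 e2
      rw [List.cons_append] at h
      simpa using ih (List.nodup_cons.mp h).2 e2

/-- A common subsequence of `M ++ E` and `F ++ M` (with suitable disjointness)
is no longer than `max |M| |F|`. -/
lemma common_subseq_bound {M E F Z : List α} (h1 : Z.Sublist (M ++ E)) (h2 : Z.Sublist (F ++ M))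
    (hME : M.Disjoint E) (hMF : F.Disjoint M) :
    Z.length ≤ M.length ∨ Z.length ≤ F.length := by
  rw [List.sublist_append_iff] at h1 h2
  obtain ⟨W₁, W₂, hW, hW1, hW2⟩ := h1
  obtain ⟨Z₁, Z₂, hZ, hZ1, hZ2⟩ := h2
  cases Z₁ with
  | nil =>
    left
    rw [List.nil_append] at hZ
    rw [hZ]
    exact hZ2.length_le
  | cons a Z₁ =>
    cases Z₂ with
    | nil =>
      right
      rw [List.append_nil] at hZ
      rw [hZ]
      exact hZ1.length_le
    | cons b Z₂ =>
      exfalso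
      have haF : a ∈ F := hZ1.subset (by simp)
      cases W₁ with
      | nil =>
        rw [List.nil_append] at hW
        have hbM : b ∈ M := hZ2.subset (by simp)
        have hbE : b ∈ E := hW2.subset (by rw [← hW, hZ]; simp)
        exact hME hbM hbE
      | cons w W₁ =>
        have hwM : w ∈ M := hW1.subset (by simp)
        have hwa : w = a := by
          have := hW.symm.trans hZ
          simpa using congrArg (fun l => l.head?) this
        exact hMF haF (hwa ▸ hwM)

/-- Key lower bound. -/
lemma key_lower {M E F : List α} (hU : (M ++ E).Nodup) (hV : (F ++ M).Nodup)
    (hEF : E.length = F.length) (hsM : E.length ≤ M.length)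
    (hdag : ∀ E₁ E₂ F₁ F₂ (z : α), E = E₁ ++ z :: E₂ → F = F₁ ++ z :: F₂ →
      F₁.length ≤ E₁.length) :
    2 * E.length ≤ ED (M ++ E) (F ++ M) := by
  obtain ⟨P, hAl, hineq⟩ := exists_al (M ++ E) (F ++ M)
  have hlenU : (M ++ E).length = M.length + E.length := by simp
  have hlenV : (F ++ M).length = M.length + E.length := by simp; omega
  set Q := P.filter (fun p => p.1 = p.2) with hQdef
  have hcnt : P.countP (fun p => p.1 = p.2) = Q.length := List.countP_eq_length_filter
  have hQfs : ∀ p ∈ Q, p.1 = p.2 := by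
    intro p hp
    simpa using List.of_mem_filter hp
  have hZU : (Q.map Prod.fst).Sublist (M ++ E) :=
    ((P.filter_sublist).map Prod.fst).trans hAl.fst_sublist
  have hZV : (Q.map Prod.fst).Sublist (F ++ M) := by
    rw [List.map_congr_left hQfs]
    exact ((P.filter_sublist).map Prod.snd).trans hAl.snd_sublist
  have hMdisE : M.Disjoint E := List.disjoint_of_nodup_append hU
  have hFdisM : F.Disjoint M := List.disjoint_of_nodup_append hV
  have hQbound : Q.length ≤ M.length := by
    rcases common_subseq_bound hZU hZV hMdisE hFdisM with h | h <;>
      simp only [List.length_map] at h <;> omega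
  have hPQ : P.length + Q.length ≤ 2 * M.length := by
    cases hQempty : Q with
    | nil =>
      have hP : P.length ≤ (M ++ E).length := by
        simpa using hAl.fst_sublist.length_le
      rw [hlenU] at hP
      simp [hQempty]
      omega
    | cons q Q' =>
      have hqmem : q ∈ P := List.mem_of_mem_filter (show q ∈ Q by rw [hQempty]; simp)
      have hq : q.1 = q.2 := hQfs q (by rw [hQempty]; simp)
      obtain ⟨P₁, P₂, hPsplit⟩ := List.append_of_mem hqmem
      obtain ⟨U₁, U₂, V₁, V₂, hUeq, hVeq, hl1, hl2, hl3, hl4⟩ := hAl.split P₁ q P₂ hPsplit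
      rw [← hq] at hVeq
      set z := q.1 with hzdef
      have hPlen : P.length = P₁.length + 1 + P₂.length := by
        rw [hPsplit]; simp; omega
      have hUlen : U₁.length + 1 + U₂.length = M.length + E.length := by
        have := congrArg List.length hUeq
        simp at this; omega
      have hVlen : V₁.length + 1 + V₂.length = M.length + E.length := by
        have := congrArg List.length hVeq
        simp at this; omega
      have hzmem : z ∈ M ++ E := by rw [hUeq]; simp
      have hPle : P.length ≤ M.length := by
        rcases List.mem_append.mp hzmem with hzM | hzE
        · -- z ∈ M
          obtain ⟨M₁, M₂, hM⟩ := List.append_of_mem hzM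
          have e1 : U₁.length = M₁.length := by
            have := nodup_split_length (A := U₁) (B := U₂) (C := M₁) (D := M₂ ++ E)
              (by rw [← hUeq]; exact hU)
              (by rw [← hUeq, hM]; simp)
            omega
          have e2 : V₁.length = F.length + M₁.length := by
            have := nodup_split_length (A := V₁) (B := V₂) (C := F ++ M₁) (D := M₂)
              (by rw [← hVeq]; exact hV)
              (by rw [← hVeq, hM]; simp)
            simp at this; omega
          have hMlen : M.length = M₁.length + 1 + M₂.length := by
            rw [hM]; simp; omega
          omega
        · -- z ∈ E, hence z ∈ F
          have hzV : z ∈ F ++ M := by rw [hVeq]; simp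
          have hzF : z ∈ F := by
            rcases List.mem_append.mp hzV with h | h
            · exact h
            · exact absurd hzE (hMdisE h)
          obtain ⟨E₁, E₂, hE⟩ := List.append_of_mem hzE
          obtain ⟨F₁, F₂, hF⟩ := List.append_of_mem hzF
          have hdg := hdag E₁ E₂ F₁ F₂ z hE hF
          have e1 : U₁.length = M.length + E₁.length := by
            have := nodup_split_length (A := U₁) (B := U₂) (C := M ++ E₁) (D := E₂)
              (by rw [← hUeq]; exact hU)
              (by rw [← hUeq, hE]; simp)
            simp at this; omega
          have e2 : V₁.length = F₁.length := by
            have := nodup_split_length (A := V₁) (B := V₂) (C := F₁) (D := F₂ ++ M)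
              (by rw [← hVeq]; exact hV)
              (by rw [← hVeq, hF]; simp)
            omega
          have hElen : E.length = E₁.length + 1 + E₂.length := by
            rw [hE]; simp; omega
          omega
      rw [← hQempty]
      omega
  rw [hlenU, hlenV, hcnt] at hineq
  omega

end EDAux

section Sub
open EDAux
variable {α : Type*} [DecidableEq α]
open List

lemma sub_length (X : List α) (i j : ℕ) (hij : i ≤ j) (hj : j ≤ X.length) :
    (sub X i j).length = j - i := by
  simp [sub]
  omega

lemma sub_append (X : List α) (i k j : ℕ) (h1 : i ≤ k) (h2 : k ≤ j) :
    sub X i k ++ sub X k j = sub X i j := by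
  unfold sub
  have h3 : j - i = (k - i) + (j - k) := by omega
  rw [h3, List.take_add, List.drop_drop]
  have h4 : i + (k - i) = k := by omega
  rw [h4]

lemma sub_sublist (X : List α) (i j : ℕ) : (sub X i j).Sublist X :=
  (List.take_sublist _ _).trans (List.drop_sublist _ _)

lemma sub_zero_left (X : List α) (j : ℕ) : sub X 0 j = X.take j := by
  simp [sub]

lemma sub_drop (X : List α) (a : ℕ) : sub X a X.length = X.drop a := by
  unfold sub
  exact List.take_of_length_le (by simp)

lemma sub_length_eq (X : List α) (n : ℕ) (hX : X.length = n) : sub X 0 n = X := by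
  rw [sub_zero_left]
  exact List.take_of_length_le (by omega)

/-- The main computation, for arbitrary aligned substrings. -/
lemma main_sub (X : List α) (n s i j : ℕ) (hX : X.length = n) (hnd : X.Nodup)
    (hs : 2 * s ≤ n) (hij : i ≤ j) (hjn : j ≤ n) (hL : 2 * s ≤ j - i) :
    ED (sub X i j) (sub (X.drop (n - s) ++ X.take (n - s)) i j) = 2 * s := by
  set Y := X.drop (n - s) ++ X.take (n - s) with hYdef
  have hYperm : Y.Perm X := by
    rw [hYdef]
    exact List.perm_append_comm.trans (List.Perm.of_eq (List.take_append_drop _ _))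
  have hYnd : Y.Nodup := (hYperm.nodup_iff).mpr hnd
  have hYlen : Y.length = n := by rw [hYperm.length_eq, hX]
  have hsj : s ≤ j - s := by omega
  have hisj : i ≤ j - s := by omega
  set M := sub X i (j - s) with hM
  set E := sub X (j - s) j with hE
  have hUeq : sub X i j = M ++ E := (sub_append X i (j - s) j hisj (by omega)).symm
  have hMlen : M.length = (j - s) - i := sub_length X i (j - s) hisj (by omega)
  have hElen : E.length = s := by
    rw [hE, sub_length X (j - s) j (by omega) (by omega)]
    omega
  rcases le_or_gt s i with hsi | his
  · -- Case A : s ≤ i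
    set F := sub X (i - s) i with hF
    have hFlen : F.length = s := by
      rw [hF, sub_length X (i - s) i (by omega) (by omega)]
      omega
    have hVeq : sub Y i j = F ++ M := by
      have hi' : i = (X.drop (n - s)).length + (i - s) := by
        rw [List.length_drop]; omega
      have h1 : Y.drop i = (X.take (n - s)).drop (i - s) := by
        conv_lhs => rw [hYdef, hi', List.drop_length_add_append]
      rw [hF, hM, sub_append X (i - s) i (j - s) (by omega) hisj]
      unfold sub
      rw [h1, List.drop_take, List.take_take]
      congr 1
      omega
    have hFMEeq : F ++ (M ++ E) = sub X (i - s) j := by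
      rw [hM, hE, hF, sub_append X i (j-s) j hisj (by omega),
        sub_append X (i-s) i j (by omega) hij]
    have hUnd : (M ++ E).Nodup := hUeq ▸ (sub_sublist X i j).nodup hnd
    have hVnd : (F ++ M).Nodup := by
      rw [← hVeq]
      exact (sub_sublist Y i j).nodup hYnd
    have hdisj : F.Disjoint (M ++ E) := by
      apply List.disjoint_of_nodup_append
      rw [hFMEeq]
      exact (sub_sublist X (i-s) j).nodup hnd
    have hlow : 2 * E.length ≤ ED (M ++ E) (F ++ M) := by
      apply key_lower hUnd hVnd (by omega) (by omega)
      intro E₁ E₂ F₁ F₂ z hE' hF'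
      exfalso
      have hzE : z ∈ E := by rw [hE']; simp
      have hzF : z ∈ F := by rw [hF']; simp
      exact hdisj hzF (List.mem_append_right M hzE)
    have hup : ED (M ++ E) (F ++ M) ≤ F.length + E.length := ED_rotate_le M F E
    rw [hUeq, hVeq]
    omega
  · -- Case B : i < s
    set A := sub X (n - s + i) n with hA
    set B := sub X 0 i with hB
    set F := A ++ B with hF
    have hAlen : A.length = s - i := by
      rw [hA, sub_length X _ n (by omega) (by omega)]
      omega
    have hBlen : B.length = i := by
      rw [hB, sub_length X 0 i (by omega) (by omega)]
      omega
    have hFlen : F.length = s := by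
      rw [hF]; simp [hAlen, hBlen]; omega
    have hAdrop : A = X.drop (n - s + i) := by
      rw [hA, ← hX, sub_drop]
    have hVeq : sub Y i j = F ++ M := by
      have h1 : Y.drop i = X.drop (n - s + i) ++ X.take (n - s) := by
        rw [hYdef, List.drop_append_of_le_length (by rw [List.length_drop]; omega),
          List.drop_drop]
      have h2 : j - i = (X.drop (n - s + i)).length + (j - s) := by
        rw [List.length_drop]; omega
      have h3 : (X.take (n - s)).take (j - s) = X.take i ++ M := by
        rw [List.take_take, show min (j - s) (n - s) = i + (j - s - i) by omega,
          List.take_add, hM]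
        rfl
      show (Y.drop i).take (j - i) = F ++ M
      rw [h1, h2, List.take_length_add_append, h3, hF, hAdrop, hB, sub_zero_left, List.append_assoc]
    have hUnd : (M ++ E).Nodup := hUeq ▸ (sub_sublist X i j).nodup hnd
    have hVnd : (F ++ M).Nodup := by
      rw [← hVeq]
      exact (sub_sublist Y i j).nodup hYnd
    have hBMEeq : B ++ (M ++ E) = sub X 0 j := by
      rw [hM, hE, hB, sub_append X i (j-s) j hisj (by omega),
        sub_append X 0 i j (by omega) hij]
    have hBdisj : B.Disjoint (M ++ E) := by
      apply List.disjoint_of_nodup_append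
      rw [hBMEeq]
      exact (sub_sublist X 0 j).nodup hnd
    have hlow : 2 * E.length ≤ ED (M ++ E) (F ++ M) := by
      apply key_lower hUnd hVnd (by omega) (by omega)
      intro E₁ E₂ F₁ F₂ z hE' hF'
      -- z ∈ E, and z ∈ F with z ∉ B hence z ∈ A
      have hzE : z ∈ E := by rw [hE']; simp
      have hzB : z ∉ B := fun hzB => hBdisj hzB (List.mem_append_right M hzE)
      have hzA : z ∈ A := by
        have : z ∈ F := by rw [hF']; simp
        rw [hF] at this
        rcases List.mem_append.mp this with h | h
        · exact h
        · exact absurd h hzB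
      obtain ⟨A₁, A₂, hAsplit⟩ := List.append_of_mem hzA
      -- decompose X around z, via E
      have hXtop : X = (X.take (j - s) ++ E₁) ++ z :: (E₂ ++ X.drop j) := by
        have : X = X.take (j - s) ++ E ++ X.drop j := by
          rw [hE]
          show X = (X.take (j - s) ++ (X.drop (j - s)).take (j - (j - s))) ++ X.drop j
          rw [← List.take_add, show j - s + (j - (j - s)) = j by omega,
            List.take_append_drop]
        conv_lhs => rw [this, hE']
        simp [List.append_assoc]
      -- decompose X around z, via A
      have hXbot : X = (X.take (n - s + i) ++ A₁) ++ z :: A₂ := by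
        have : X = X.take (n - s + i) ++ A := by
          rw [hAdrop]
          exact (List.take_append_drop _ _).symm
        conv_lhs => rw [this, hAsplit]
        simp [List.append_assoc]
      have hkey : (j - s) + E₁.length = (n - s + i) + A₁.length := by
        have := nodup_split_length (A := X.take (j - s) ++ E₁)
          (B := E₂ ++ X.drop j) (C := X.take (n - s + i) ++ A₁) (D := A₂)
          (by rw [← hXtop]; exact hnd) (hXtop.symm.trans hXbot)
        simp at this
        have ht1 : (X.take (j - s)).length = j - s := by simp; omega
        have ht2 : (X.take (n - s + i)).length = n - s + i := by simp; omega
        omega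
      -- F₁.length = A₁.length
      have hFsplit : F = A₁ ++ z :: (A₂ ++ B) := by
        rw [hF, hAsplit]; simp
      have hFnd : F.Nodup := (List.nodup_append.mp hVnd).1
      have hF1len : F₁.length = A₁.length := by
        have := nodup_split_length (A := F₁) (B := F₂) (C := A₁) (D := A₂ ++ B)
          (by rw [← hF']; exact hFnd) (by rw [← hF', hFsplit])
        omega
      omega
    have hup : ED (M ++ E) (F ++ M) ≤ F.length + E.length := ED_rotate_le M F E
    rw [hUeq, hVeq]
    omega

end Sub


/-- If X has n pairwise distinct characters and Y is obtained by moving the last s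
characters of X to the front (s ≤ n/2), then ED(X,Y) = 2s, and every aligned
substring pair X[i..j), Y[i..j) with j − i ≥ 2s also has edit distance exactly 2s. -/
theorem stmt_15 {α : Type*} [DecidableEq α] (n s : ℕ) (X Y : List α)
    (hX : X.length = n) (hnodup : X.Nodup)
    (hs : 2 * s ≤ n)
    (hY : Y = X.drop (n - s) ++ X.take (n - s)) :
    ED X Y = 2 * s ∧
      ∀ i j : ℕ, i ≤ j → j ≤ n → 2 * s ≤ j - i → ED (sub X i j) (sub Y i j) = 2 * s := by
  subst hY
  have hYlen : (X.drop (n - s) ++ X.take (n - s)).length = n := by simp; omega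
  constructor
  · have h1 : sub X 0 n = X := sub_length_eq X n hX
    have h2 := sub_length_eq (X.drop (n - s) ++ X.take (n - s)) n hYlen
    have h := main_sub X n s 0 n hX hnodup hs (by omega) le_rfl (by omega)
    rwa [h1, h2] at h
  · intro i j h1 h2 h3
    exact main_sub X n s i j hX hnodup hs h1 h2 h3
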